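/- Under hypothesis (I), every plane of PG(4,q) (q even) through the unique red point contains exactly q+1 black points. -/
import Mathlib


open Submodule Set

/-- Points of `PG(4,q)`: one-dimensional subspaces of `F^5`. -/
abbrev PGPoint (F : Type*) [Field F] := {W : Submodule F (Fin 5 → F) // Module.finrank F W = 1}
/-- Lines of `PG(4,q)`: two-dimensional subspaces of `F^5`. -/
abbrev PGLine (F : Type*) [Field F] := {W : Submodule F (Fin 5 → F) // Module.finrank F W = 2}
/-- Planes of `PG(4,q)`: three-dimensional subspaces of `F^5`. -/
abbrev PGPlane (F : Type*) [Field F] := {W : Submodule F (Fin 5 → F) // Module.finrank F W = 3}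
/-- Solids (hyperplanes) of `PG(4,q)`: four-dimensional subspaces of `F^5`. -/
abbrev PGSolid (F : Type*) [Field F] := {W : Submodule F (Fin 5 → F) // Module.finrank F W = 4}

variable {F : Type*} [Field F]

/-- The solids of `H` through the point `P`. -/
def solidsThrough (H : Set (PGSolid F)) (P : PGPoint F) : Set (PGSolid F) :=
  {S ∈ H | P.1 ≤ S.1}

/-- Hypothesis (I): every point lies on `0`, `q^3/2` or `(q^3+q^2)/2` solids of `H`. -/
def CondI (q : ℕ) (H : Set (PGSolid F)) : Prop :=
  ∀ P : PGPoint F,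
    (solidsThrough H P).ncard = 0 ∨
    2 * (solidsThrough H P).ncard = q ^ 3 ∨
    2 * (solidsThrough H P).ncard = q ^ 3 + q ^ 2

/-- A red point: lies on no solid of `H`. -/
def Red (H : Set (PGSolid F)) (P : PGPoint F) : Prop := (solidsThrough H P).ncard = 0

/-- A white point: lies on `q^3/2` solids of `H`. -/
def White (q : ℕ) (H : Set (PGSolid F)) (P : PGPoint F) : Prop :=
  2 * (solidsThrough H P).ncard = q ^ 3

/-- A black point: lies on `(q^3+q^2)/2` solids of `H`. -/
def Black (q : ℕ) (H : Set (PGSolid F)) (P : PGPoint F) : Prop :=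
  2 * (solidsThrough H P).ncard = q ^ 3 + q ^ 2

/-- The black points contained in a subspace `W`. -/
def blackIn (q : ℕ) (H : Set (PGSolid F)) (W : Submodule F (Fin 5 → F)) : Set (PGPoint F) :=
  {P : PGPoint F | Black q H P ∧ P.1 ≤ W}


set_option linter.unusedSectionVars false
set_option maxHeartbeats 1000000

open Module Finset
open scoped Classical

section Aux

variable [Fintype F]

instance : Finite (Submodule F (Fin 5 → F)) :=
  Finite.of_injective (fun W => (W : Set (Fin 5 → F))) SetLike.coe_injective

noncomputable instance : Fintype (PGPoint F) := Fintype.ofFinite _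
noncomputable instance : Fintype (PGSolid F) := Fintype.ofFinite _

/-- The points lying in a subspace `W`, as a Finset. -/
noncomputable def ptsIn (W : Submodule F (Fin 5 → F)) : Finset (PGPoint F) :=
  Finset.univ.filter (fun P => P.1 ≤ W)

lemma mem_ptsIn {W : Submodule F (Fin 5 → F)} {P : PGPoint F} : P ∈ ptsIn W ↔ P.1 ≤ W := by
  simp [ptsIn]

/-- generic double counting -/
lemma dc {α β : Type*} (A : Finset α) (B : Finset β) (r : α → β → Prop) :
    ∑ a ∈ A, (B.filter (fun b => r a b)).card = ∑ b ∈ B, (A.filter (fun a => r a b)).card := by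
  simp only [Finset.card_filter]
  rw [Finset.sum_comm]

lemma card_nonzero (U : Submodule F (Fin 5 → F)) :
    (Finset.univ.filter (fun v => v ∈ U ∧ v ≠ 0)).card
      = Fintype.card F ^ (finrank F U) - 1 := by
  have h1 : (Finset.univ.filter (fun v => v ∈ U ∧ v ≠ 0))
      = (Finset.univ.filter (fun v => v ∈ U)).erase 0 := by
    ext v; simp [and_comm, eq_comm]
  have h2 : (Finset.univ.filter (fun v : Fin 5 → F => v ∈ U)).card = Fintype.card U := by
    rw [Fintype.card_subtype]
  rw [h1, Finset.card_erase_of_mem (by simp), h2, card_eq_pow_finrank (K := F)]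

/-- A 1-dimensional subspace containing nonzero `v` is the span of `v`. -/
lemma point_eq_span {v : Fin 5 → F} (hv : v ≠ 0) (P : PGPoint F) (hvP : v ∈ P.1) :
    P.1 = span F {v} := by
  have hle : span F {v} ≤ P.1 := (span_singleton_le_iff_mem v P.1).2 hvP
  have := Submodule.eq_of_le_of_finrank_le hle (by
    rw [P.2, finrank_span_singleton hv])
  exact this.symm

/-- Fundamental count: the points in `W` number `(q^dim - 1)/(q-1)`. -/
lemma card_ptsIn_mul (W : Submodule F (Fin 5 → F)) :
    (ptsIn W).card * (Fintype.card F - 1) = Fintype.card F ^ (finrank F W) - 1 := by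
  have key := dc (ptsIn W) (Finset.univ.filter (fun v : Fin 5 → F => v ∈ W ∧ v ≠ 0))
      (fun P v => v ∈ P.1)
  have hL : ∀ P ∈ ptsIn W,
      ((Finset.univ.filter (fun v : Fin 5 → F => v ∈ W ∧ v ≠ 0)).filter
        (fun v => v ∈ P.1)).card = Fintype.card F - 1 := by
    intro P hP
    have hPW : P.1 ≤ W := mem_ptsIn.1 hP
    have heq : ((Finset.univ.filter (fun v : Fin 5 → F => v ∈ W ∧ v ≠ 0)).filter
        (fun v => v ∈ P.1)) = Finset.univ.filter (fun v => v ∈ P.1 ∧ v ≠ 0) := by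
      ext v
      simp only [Finset.mem_filter, Finset.mem_univ, true_and]
      exact ⟨fun h => ⟨h.2, h.1.2⟩, fun h => ⟨⟨hPW h.1, h.2⟩, h.1⟩⟩
    rw [heq, card_nonzero, P.2, pow_one]
  have hR : ∀ v ∈ (Finset.univ.filter (fun v : Fin 5 → F => v ∈ W ∧ v ≠ 0)),
      ((ptsIn W).filter (fun P => v ∈ P.1)).card = 1 := by
    intro v hv
    simp only [Finset.mem_filter, Finset.mem_univ, true_and] at hv
    obtain ⟨hvW, hv0⟩ := hv
    have hsp : finrank F (span F ({v} : Set (Fin 5 → F))) = 1 := finrank_span_singleton hv0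
    have heq : (ptsIn W).filter (fun P => v ∈ P.1) = {⟨span F {v}, hsp⟩} := by
      ext P
      simp only [Finset.mem_filter, mem_ptsIn, Finset.mem_singleton]
      constructor
      · rintro ⟨hPW, hvP⟩
        exact Subtype.ext (point_eq_span hv0 P hvP)
      · rintro rfl
        exact ⟨(span_singleton_le_iff_mem v W).2 hvW, mem_span_singleton_self v⟩
    rw [heq, Finset.card_singleton]
  rw [Finset.sum_congr rfl hL, Finset.sum_congr rfl hR, Finset.sum_const, Finset.sum_const,
    smul_eq_mul, smul_eq_mul, mul_one, card_nonzero] at key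
  exact key

set_option linter.unusedSectionVars false

lemma finrank_amb : finrank F (Fin 5 → F) = 5 := Module.finrank_fin_fun F

lemma finrank_le5 (W : Submodule F (Fin 5 → F)) : finrank F W ≤ 5 := by
  have := Submodule.finrank_le W
  rwa [finrank_amb] at this

/-- intersecting with a hyperplane not containing you drops dimension by exactly 1 -/
lemma finrank_inf_hyp {W V : Submodule F (Fin 5 → F)} (hV : finrank F V = 4)
    (h : ¬ W ≤ V) : finrank F ↥(W ⊓ V) + 1 = finrank F W := by
  have hsum := Submodule.finrank_sup_add_finrank_inf_eq W V
  have h5 : finrank F ↥(W ⊔ V) ≤ 5 := finrank_le5 _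
  have hlt : V < W ⊔ V := lt_of_le_of_ne le_sup_right (by
    intro hEq
    exact h (hEq ▸ le_sup_left))
  have := Submodule.finrank_lt_finrank_of_lt hlt
  rw [hV] at this
  omega

/-- two distinct solids meet in a plane -/
lemma finrank_inf_solids {S T : PGSolid F} (h : S ≠ T) : finrank F ↥(S.1 ⊓ T.1) = 3 := by
  have hnle : ¬ S.1 ≤ T.1 := by
    intro hle
    exact h (Subtype.ext (Submodule.eq_of_le_of_finrank_le hle (by rw [S.2, T.2])))
  have := finrank_inf_hyp T.2 hnle
  rw [S.2] at this
  omega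

/-- the line joining two distinct points -/
lemma finrank_sup_points {R P : PGPoint F} (h : P ≠ R) : finrank F ↥(R.1 ⊔ P.1) = 2 := by
  have hsum := Submodule.finrank_sup_add_finrank_inf_eq R.1 P.1
  have hlt : R.1 ⊓ P.1 < R.1 := lt_of_le_of_ne inf_le_left (by
    intro hEq
    have hle : R.1 ≤ P.1 := by rw [← hEq]; exact inf_le_right
    exact h (Subtype.ext (Submodule.eq_of_le_of_finrank_le hle (by rw [R.2, P.2])).symm))
  have := Submodule.finrank_lt_finrank_of_lt hlt
  rw [R.2, P.2] at hsum
  rw [R.2] at this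
  omega

/-- nat identities : (q^d-1)/(q-1) values -/
lemma geom2 {q : ℕ} (hq : 1 ≤ q) : (q + 1) * (q - 1) = q ^ 2 - 1 := by
  obtain ⟨m, rfl⟩ : ∃ m, q = m + 1 := ⟨q - 1, by omega⟩
  have h : (m + 1) ^ 2 = (m + 1 + 1) * m + 1 := by ring
  rw [h, Nat.add_sub_cancel, Nat.add_sub_cancel]

lemma geom3 {q : ℕ} (hq : 1 ≤ q) : (q ^ 2 + q + 1) * (q - 1) = q ^ 3 - 1 := by
  obtain ⟨m, rfl⟩ : ∃ m, q = m + 1 := ⟨q - 1, by omega⟩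
  have h : (m + 1) ^ 3 = ((m + 1) ^ 2 + (m + 1) + 1) * m + 1 := by ring
  rw [h, Nat.add_sub_cancel, Nat.add_sub_cancel]

lemma geom4 {q : ℕ} (hq : 1 ≤ q) : (q ^ 3 + q ^ 2 + q + 1) * (q - 1) = q ^ 4 - 1 := by
  obtain ⟨m, rfl⟩ : ∃ m, q = m + 1 := ⟨q - 1, by omega⟩
  have h : (m + 1) ^ 4 = ((m + 1) ^ 3 + (m + 1) ^ 2 + (m + 1) + 1) * m + 1 := by ring
  rw [h, Nat.add_sub_cancel, Nat.add_sub_cancel]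

lemma geom5 {q : ℕ} (hq : 1 ≤ q) : (q ^ 4 + q ^ 3 + q ^ 2 + q + 1) * (q - 1) = q ^ 5 - 1 := by
  obtain ⟨m, rfl⟩ : ∃ m, q = m + 1 := ⟨q - 1, by omega⟩
  have h : (m + 1) ^ 5 = ((m + 1) ^ 4 + (m + 1) ^ 3 + (m + 1) ^ 2 + (m + 1) + 1) * m + 1 := by
    ring
  rw [h, Nat.add_sub_cancel, Nat.add_sub_cancel]

/-- number of points by dimension -/
lemma card_ptsIn_eq {W : Submodule F (Fin 5 → F)} {t : ℕ}
    (h : t * (Fintype.card F - 1) = Fintype.card F ^ (finrank F W) - 1) :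
    (ptsIn W).card = t := by
  have hq : 1 < Fintype.card F := Fintype.one_lt_card
  have h2 := card_ptsIn_mul W
  apply Nat.eq_of_mul_eq_mul_right (show 0 < Fintype.card F - 1 by omega)
  rw [h2, h]

lemma card_ptsIn_1 {W : Submodule F (Fin 5 → F)} (h : finrank F W = 1) :
    (ptsIn W).card = 1 := card_ptsIn_eq (by rw [h, pow_one, one_mul])

lemma card_ptsIn_2 {W : Submodule F (Fin 5 → F)} (h : finrank F W = 2) :
    (ptsIn W).card = Fintype.card F + 1 :=
  card_ptsIn_eq (by rw [h, geom2 Fintype.card_pos])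

lemma card_ptsIn_3 {W : Submodule F (Fin 5 → F)} (h : finrank F W = 3) :
    (ptsIn W).card = Fintype.card F ^ 2 + Fintype.card F + 1 :=
  card_ptsIn_eq (by rw [h, geom3 Fintype.card_pos])

lemma card_ptsIn_4 {W : Submodule F (Fin 5 → F)} (h : finrank F W = 4) :
    (ptsIn W).card = Fintype.card F ^ 3 + Fintype.card F ^ 2 + Fintype.card F + 1 :=
  card_ptsIn_eq (by rw [h, geom4 Fintype.card_pos])

lemma card_pts_univ :
    (Finset.univ : Finset (PGPoint F)).card
      = Fintype.card F ^ 4 + Fintype.card F ^ 3 + Fintype.card F ^ 2 + Fintype.card F + 1 := by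
  have h : (Finset.univ : Finset (PGPoint F)) = ptsIn ⊤ := by
    ext P; simp [mem_ptsIn, le_top]
  rw [h]
  exact card_ptsIn_eq (by rw [finrank_top, finrank_amb, geom5 Fintype.card_pos])


noncomputable def Hf (H : Set (PGSolid F)) : Finset (PGSolid F) := (Set.toFinite H).toFinset

lemma mem_Hf {H : Set (PGSolid F)} {S : PGSolid F} : S ∈ Hf H ↔ S ∈ H :=
  Set.Finite.mem_toFinset _

noncomputable def nP (H : Set (PGSolid F)) (P : PGPoint F) : ℕ := (solidsThrough H P).ncard

lemma nP_eq (H : Set (PGSolid F)) (P : PGPoint F) :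
    nP H P = ((Hf H).filter (fun S => P.1 ≤ S.1)).card := by
  rw [nP, ← Set.ncard_coe_finset]
  congr 1
  ext S
  simp [solidsThrough, mem_Hf]

lemma red_not_le {H : Set (PGSolid F)} {R : PGPoint F} (hR : Red H R) :
    ∀ S ∈ Hf H, ¬ R.1 ≤ S.1 := by
  intro S hS hle
  have h0 : solidsThrough H R = ∅ := (Set.ncard_eq_zero (Set.toFinite _)).1 hR
  have : S ∈ solidsThrough H R := ⟨mem_Hf.1 hS, hle⟩
  rw [h0] at this
  exact this

lemma sum_nP_const {H : Set (PGSolid F)} {W : Submodule F (Fin 5 → F)} {m : ℕ}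
    (hm : ∀ S ∈ Hf H, (ptsIn (W ⊓ S.1)).card = m) :
    ∑ P ∈ ptsIn W, nP H P = (Hf H).card * m := by
  simp_rw [nP_eq]
  rw [dc]
  have h : ∀ S ∈ Hf H, ((ptsIn W).filter (fun P => P.1 ≤ S.1)).card = m := by
    intro S hS
    have : (ptsIn W).filter (fun P => P.1 ≤ S.1) = ptsIn (W ⊓ S.1) := by
      ext P; simp [mem_ptsIn, le_inf_iff, ptsIn]
    rw [this, hm S hS]
  rw [Finset.sum_congr rfl h, Finset.sum_const, smul_eq_mul]

/-- sum over a line through the red point -/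
lemma sum_line {H : Set (PGSolid F)} {R : PGPoint F} (hR : Red H R)
    {W : Submodule F (Fin 5 → F)} (hW : finrank F W = 2) (hRW : R.1 ≤ W) :
    ∑ P ∈ ptsIn W, nP H P = (Hf H).card := by
  rw [show (Hf H).card = (Hf H).card * 1 from (mul_one _).symm]
  apply sum_nP_const
  intro S hS
  apply card_ptsIn_1
  have hnle : ¬ W ≤ S.1 := fun h => red_not_le hR S hS (le_trans hRW h)
  have := finrank_inf_hyp S.2 hnle
  omega

/-- sum over a plane through the red point -/
lemma sum_plane {H : Set (PGSolid F)} {R : PGPoint F} (hR : Red H R)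
    {W : Submodule F (Fin 5 → F)} (hW : finrank F W = 3) (hRW : R.1 ≤ W) :
    ∑ P ∈ ptsIn W, nP H P = (Hf H).card * (Fintype.card F + 1) := by
  apply sum_nP_const
  intro S hS
  apply card_ptsIn_2
  have hnle : ¬ W ≤ S.1 := fun h => red_not_le hR S hS (le_trans hRW h)
  have := finrank_inf_hyp S.2 hnle
  omega

/-- first global moment -/
lemma sum_univ_nP (H : Set (PGSolid F)) :
    ∑ P : PGPoint F, nP H P = (Hf H).card *
      (Fintype.card F ^ 3 + Fintype.card F ^ 2 + Fintype.card F + 1) := by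
  have h : (Finset.univ : Finset (PGPoint F)) = ptsIn ⊤ := by
    ext P; simp [mem_ptsIn, le_top]
  rw [h]
  apply sum_nP_const
  intro S hS
  rw [top_inf_eq]
  exact card_ptsIn_4 S.2

/-- sum over a solid of `H` -/
lemma sum_solid {H : Set (PGSolid F)} {S₀ : PGSolid F} (hS₀ : S₀ ∈ Hf H) :
    ∑ P ∈ ptsIn S₀.1, nP H P =
      (Fintype.card F ^ 3 + Fintype.card F ^ 2 + Fintype.card F + 1)
      + ((Hf H).card - 1) * (Fintype.card F ^ 2 + Fintype.card F + 1) := by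
  simp_rw [nP_eq]
  rw [dc]
  have h : ∀ S ∈ Hf H, ((ptsIn S₀.1).filter (fun P => P.1 ≤ S.1)).card
      = (ptsIn (S₀.1 ⊓ S.1)).card := by
    intro S hS
    congr 1
    ext P; simp [mem_ptsIn, le_inf_iff, ptsIn]
  rw [Finset.sum_congr rfl h, ← Finset.add_sum_erase _ _ hS₀]
  have h1 : (ptsIn (S₀.1 ⊓ S₀.1)).card
      = Fintype.card F ^ 3 + Fintype.card F ^ 2 + Fintype.card F + 1 := by
    rw [inf_idem]; exact card_ptsIn_4 S₀.2
  have h2 : ∀ S ∈ (Hf H).erase S₀, (ptsIn (S₀.1 ⊓ S.1)).card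
      = Fintype.card F ^ 2 + Fintype.card F + 1 := by
    intro S hS
    exact card_ptsIn_3 (finrank_inf_solids (Finset.ne_of_mem_erase hS).symm)
  rw [h1, Finset.sum_congr rfl h2, Finset.sum_const, smul_eq_mul,
    Finset.card_erase_of_mem hS₀]

/-- global pair count -/
lemma sum_pairs (H : Set (PGSolid F)) :
    ∑ P : PGPoint F, nP H P * (nP H P - 1) =
      (Hf H).card * ((Hf H).card - 1) *
        (Fintype.card F ^ 2 + Fintype.card F + 1) := by
  have step1 : ∀ P : PGPoint F, nP H P * (nP H P - 1) =
      ∑ S ∈ (Hf H).filter (fun S => P.1 ≤ S.1),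
        (((Hf H).erase S).filter (fun T => P.1 ≤ T.1)).card := by
    intro P
    have h : ∀ S ∈ (Hf H).filter (fun S => P.1 ≤ S.1),
        (((Hf H).erase S).filter (fun T => P.1 ≤ T.1)).card
          = ((Hf H).filter (fun S => P.1 ≤ S.1)).card - 1 := by
      intro S hS
      have he : ((Hf H).erase S).filter (fun T => P.1 ≤ T.1)
          = ((Hf H).filter (fun S => P.1 ≤ S.1)).erase S := by
        ext T
        simp only [Finset.mem_filter, Finset.mem_erase]
        tauto
      rw [he, Finset.card_erase_of_mem hS]
    rw [Finset.sum_congr rfl h, Finset.sum_const, smul_eq_mul, nP_eq]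
  simp_rw [step1]
  have step2 : ∀ P : PGPoint F,
      ∑ S ∈ (Hf H).filter (fun S => P.1 ≤ S.1),
        (((Hf H).erase S).filter (fun T => P.1 ≤ T.1)).card
      = ∑ S ∈ Hf H, if P.1 ≤ S.1 then
          (((Hf H).erase S).filter (fun T => P.1 ≤ T.1)).card else 0 := by
    intro P
    rw [Finset.sum_filter]
  simp_rw [step2]
  rw [Finset.sum_comm]
  have step3 : ∀ S ∈ Hf H,
      (∑ P : PGPoint F, if P.1 ≤ S.1 then
          (((Hf H).erase S).filter (fun T => P.1 ≤ T.1)).card else 0)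
      = ((Hf H).card - 1) * (Fintype.card F ^ 2 + Fintype.card F + 1) := by
    intro S hS
    rw [← Finset.sum_filter]
    have hpts : Finset.univ.filter (fun P : PGPoint F => P.1 ≤ S.1) = ptsIn S.1 := rfl
    rw [hpts, dc]
    have h : ∀ T ∈ (Hf H).erase S, ((ptsIn S.1).filter (fun P => P.1 ≤ T.1)).card
        = Fintype.card F ^ 2 + Fintype.card F + 1 := by
      intro T hT
      have : (ptsIn S.1).filter (fun P => P.1 ≤ T.1) = ptsIn (S.1 ⊓ T.1) := by
        ext P; simp [mem_ptsIn, le_inf_iff, ptsIn]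
      rw [this]
      exact card_ptsIn_3 (finrank_inf_solids (Finset.ne_of_mem_erase hT).symm)
    rw [Finset.sum_congr rfl h, Finset.sum_const, smul_eq_mul,
      Finset.card_erase_of_mem hS]
  rw [Finset.sum_congr rfl step3, Finset.sum_const, smul_eq_mul, ← mul_assoc]

/-- trichotomy sum -/
lemma tri {q : ℕ} {H : Set (PGSolid F)} (hq2 : 2 ≤ q) (hI : CondI q H)
    (T : Finset (PGPoint F)) (g : ℕ → ℕ) :
    ∑ P ∈ T, g (2 * nP H P) =
      (T.filter (fun P => Red H P)).card * g 0
      + (T.filter (fun P => White q H P)).card * g (q ^ 3)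
      + (T.filter (fun P => Black q H P)).card * g (q ^ 3 + q ^ 2) := by
  have hq3 : 0 < q ^ 3 := by positivity
  have hq2' : 0 < q ^ 2 := by positivity
  have hRW : ∀ P, Red H P → ¬ White q H P := by
    intro P h1 h2
    rw [Red] at h1; rw [White, h1] at h2; omega
  have hRB : ∀ P, Red H P → ¬ Black q H P := by
    intro P h1 h2
    rw [Red] at h1; rw [Black, h1] at h2; omega
  have hWB : ∀ P, White q H P → ¬ Black q H P := by
    intro P h1 h2
    rw [White] at h1; rw [Black, h1] at h2; omega
  have hunion : T = (T.filter (fun P => Red H P) ∪ T.filter (fun P => White q H P))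
      ∪ T.filter (fun P => Black q H P) := by
    ext P
    simp only [Finset.mem_union, Finset.mem_filter]
    constructor
    · intro hP
      rcases hI P with h | h | h
      · exact Or.inl (Or.inl ⟨hP, h⟩)
      · exact Or.inl (Or.inr ⟨hP, h⟩)
      · exact Or.inr ⟨hP, h⟩
    · rintro ((⟨h, _⟩ | ⟨h, _⟩) | ⟨h, _⟩) <;> exact h
  have hd1 : Disjoint (T.filter (fun P => Red H P)) (T.filter (fun P => White q H P)) := by
    rw [Finset.disjoint_left]
    intro P h1 h2
    rw [Finset.mem_filter] at h1 h2
    exact hRW P h1.2 h2.2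
  have hd2 : Disjoint (T.filter (fun P => Red H P) ∪ T.filter (fun P => White q H P))
      (T.filter (fun P => Black q H P)) := by
    rw [Finset.disjoint_left]
    intro P h1 h2
    rw [Finset.mem_union] at h1
    rw [Finset.mem_filter] at h2
    rcases h1 with h1 | h1 <;> rw [Finset.mem_filter] at h1
    · exact hRB P h1.2 h2.2
    · exact hWB P h1.2 h2.2
  conv_lhs => rw [hunion]
  rw [Finset.sum_union hd2, Finset.sum_union hd1]
  have e1 : ∑ P ∈ T.filter (fun P => Red H P), g (2 * nP H P)
      = ∑ _P ∈ T.filter (fun P => Red H P), g 0 := by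
    apply Finset.sum_congr rfl
    intro P hP
    rw [Finset.mem_filter] at hP
    have h0 : nP H P = 0 := hP.2
    rw [h0, mul_zero]
  have e2 : ∑ P ∈ T.filter (fun P => White q H P), g (2 * nP H P)
      = ∑ _P ∈ T.filter (fun P => White q H P), g (q ^ 3) := by
    apply Finset.sum_congr rfl
    intro P hP
    rw [Finset.mem_filter] at hP
    have h0 : 2 * nP H P = q ^ 3 := hP.2
    rw [h0]
  have e3 : ∑ P ∈ T.filter (fun P => Black q H P), g (2 * nP H P)
      = ∑ _P ∈ T.filter (fun P => Black q H P), g (q ^ 3 + q ^ 2) := by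
    apply Finset.sum_congr rfl
    intro P hP
    rw [Finset.mem_filter] at hP
    have h0 : 2 * nP H P = q ^ 3 + q ^ 2 := hP.2
    rw [h0]
  rw [e1, e2, e3, Finset.sum_const, Finset.sum_const, Finset.sum_const]
  simp [mul_comm]

lemma reds_in_solid {H : Set (PGSolid F)} {S₀ : PGSolid F} (hS₀ : S₀ ∈ Hf H) :
    (ptsIn S₀.1).filter (fun P => Red H P) = ∅ := by
  ext P
  simp only [Finset.mem_filter, Finset.notMem_empty, iff_false, not_and]
  intro hPS hred
  have h0 : solidsThrough H P = ∅ := (Set.ncard_eq_zero (Set.toFinite _)).1 hred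
  have : S₀ ∈ solidsThrough H P := ⟨mem_Hf.1 hS₀, mem_ptsIn.1 hPS⟩
  rw [h0] at this
  exact this

/-- numeric facts on a line through two red points -/
lemma line_facts {q : ℕ} {H : Set (PGSolid F)} {R P : PGPoint F}
    (hq2 : 2 ≤ q) (hcard : Fintype.card F = q) (hI : CondI q H)
    (hR : Red H R) (hPR : P ≠ R) :
    ∃ r w k : ℕ, q + 1 = r + w + k ∧ (Red H P → 2 ≤ r) ∧
      ((∀ P' : PGPoint F, Red H P' → P' = R) → r = 1) ∧
      w * q ^ 3 + k * (q ^ 3 + q ^ 2) = 2 * (Hf H).card := by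
  subst hcard
  set L : Submodule F (Fin 5 → F) := R.1 ⊔ P.1 with hL
  have hW2 : finrank F L = 2 := finrank_sup_points hPR
  refine ⟨((ptsIn L).filter (fun P' => Red H P')).card,
    ((ptsIn L).filter (fun P' => White (Fintype.card F) H P')).card,
    ((ptsIn L).filter (fun P' => Black (Fintype.card F) H P')).card, ?_, ?_, ?_, ?_⟩
  · have h := tri hq2 hI (ptsIn L) (fun _ => 1)
    simp only [mul_one] at h
    rw [Finset.sum_const, smul_eq_mul, mul_one, card_ptsIn_2 hW2] at h
    exact h
  · intro hP
    have hsub : ({P, R} : Finset (PGPoint F)) ⊆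
        (ptsIn L).filter (fun P' => Red H P') := by
      intro x hx
      rw [Finset.mem_insert, Finset.mem_singleton] at hx
      rcases hx with rfl | rfl
      · exact Finset.mem_filter.2 ⟨mem_ptsIn.2 le_sup_right, hP⟩
      · exact Finset.mem_filter.2 ⟨mem_ptsIn.2 le_sup_left, hR⟩
    calc 2 = ({P, R} : Finset (PGPoint F)).card := (Finset.card_pair hPR).symm
    _ ≤ _ := Finset.card_le_card hsub
  · intro huniq
    have heq : (ptsIn L).filter (fun P' => Red H P') = {R} := by
      ext x
      simp only [Finset.mem_filter, Finset.mem_singleton]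
      constructor
      · rintro ⟨_, hx⟩; exact huniq x hx
      · rintro rfl; exact ⟨mem_ptsIn.2 (hL ▸ le_sup_left), hR⟩
    rw [heq, Finset.card_singleton]
  · have h := tri hq2 hI (ptsIn L) id
    simp only [id_eq, mul_zero, zero_add] at h
    rw [← Finset.mul_sum, sum_line hR hW2 (hL ▸ le_sup_left)] at h
    exact h.symm

/-- numeric facts on a solid of `H` -/
lemma solid_facts {q : ℕ} {H : Set (PGSolid F)} {S₀ : PGSolid F}
    (hq2 : 2 ≤ q) (hcard : Fintype.card F = q) (hI : CondI q H) (hS₀ : S₀ ∈ Hf H) :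
    ∃ wS kS : ℕ, q ^ 3 + q ^ 2 + q + 1 = wS + kS ∧
      wS * q ^ 3 + kS * (q ^ 3 + q ^ 2)
        = 2 * ((q ^ 3 + q ^ 2 + q + 1) + ((Hf H).card - 1) * (q ^ 2 + q + 1)) := by
  subst hcard
  refine ⟨((ptsIn S₀.1).filter (fun P' => White (Fintype.card F) H P')).card,
    ((ptsIn S₀.1).filter (fun P' => Black (Fintype.card F) H P')).card, ?_, ?_⟩
  · have h := tri hq2 hI (ptsIn S₀.1) (fun _ => 1)
    simp only [mul_one] at h
    rw [Finset.sum_const, smul_eq_mul, mul_one, card_ptsIn_4 S₀.2,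
      reds_in_solid hS₀, Finset.card_empty, zero_add] at h
    exact h
  · have := tri hq2 hI (ptsIn S₀.1) id
    simp only [id_eq, mul_zero, zero_add] at this
    rw [← Finset.mul_sum, sum_solid hS₀] at this
    exact this.symm

set_option maxHeartbeats 2000000 in
lemma red_unique {q : ℕ} {H : Set (PGSolid F)} {R : PGPoint F}
    (hq2 : 2 ≤ q) (hcard : Fintype.card F = q) (hne : H.Nonempty) (hI : CondI q H)
    (hR : Red H R) : ∀ P : PGPoint F, Red H P → P = R := by
  intro P hP
  by_contra hPR
  obtain ⟨S₀, hS₀H⟩ := hne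
  have hS₀ : S₀ ∈ Hf H := mem_Hf.2 hS₀H
  obtain ⟨c', hc'⟩ : ∃ c', (Hf H).card = c' + 1 :=
    ⟨(Hf H).card - 1, by have := Finset.card_pos.2 ⟨S₀, hS₀⟩; omega⟩
  obtain ⟨r, w, k, h1, h2', _, h3⟩ := line_facts hq2 hcard hI hR hPR
  have h2 : 2 ≤ r := h2' hP
  obtain ⟨wS, kS, h4, h5⟩ := solid_facts hq2 hcard hI hS₀
  rw [hc'] at h3 h5
  rw [Nat.add_sub_cancel] at h5
  -- cast to ℤ
  have hq0 : (2:ℤ) ≤ (q:ℤ) := by exact_mod_cast hq2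
  have h1z : ((q:ℤ)) + 1 = (r:ℤ) + w + k := by exact_mod_cast h1
  have h3z : (w:ℤ) * q ^ 3 + k * (q ^ 3 + q ^ 2) = 2 * ((c':ℤ) + 1) := by exact_mod_cast h3
  have h4z : ((q:ℤ) ^ 3 + q ^ 2 + q + 1) = (wS:ℤ) + kS := by exact_mod_cast h4
  have h5z : (wS:ℤ) * q ^ 3 + kS * (q ^ 3 + q ^ 2)
      = 2 * ((q ^ 3 + q ^ 2 + q + 1) + (c':ℤ) * (q ^ 2 + q + 1)) := by exact_mod_cast h5
  have hrz : (2:ℤ) ≤ (r:ℤ) := by exact_mod_cast h2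
  have hw0 : (0:ℤ) ≤ (w:ℤ) := by positivity
  have hk0 : (0:ℤ) ≤ (k:ℤ) := by positivity
  have hkS0 : (0:ℤ) ≤ (kS:ℤ) := by positivity
  have hwkz : (w:ℤ) + k ≤ (q:ℤ) - 1 := by linarith
  have hb1 : 2 * ((c':ℤ) + 1) ≤ ((q:ℤ) - 1) * q ^ 3 + ((q:ℤ) - 1) * q ^ 2 := by
    have p1 : ((w:ℤ) + k) * q ^ 3 ≤ ((q:ℤ) - 1) * q ^ 3 :=
      mul_le_mul_of_nonneg_right hwkz (by positivity)
    have p2 : (k:ℤ) * q ^ 2 ≤ ((q:ℤ) - 1) * q ^ 2 :=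
      mul_le_mul_of_nonneg_right (by linarith) (by positivity)
    nlinarith [p1, p2]
  have hb2 : ((q:ℤ) ^ 3 + q ^ 2 + q + 1) * q ^ 3
      ≤ 2 * ((q:ℤ) ^ 3 + q ^ 2 + q + 1) + 2 * (c':ℤ) * (q ^ 2 + q + 1) := by
    have e : (wS:ℤ) * q ^ 3 + kS * q ^ 3 = ((q:ℤ) ^ 3 + q ^ 2 + q + 1) * q ^ 3 := by
      linear_combination (q:ℤ) ^ 3 * h4z.symm
    nlinarith [h5z, e, mul_nonneg hkS0 (show (0:ℤ) ≤ (q:ℤ)^2 by positivity)]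
  have hb3 : 2 * (c':ℤ) * (q ^ 2 + q + 1)
      ≤ (((q:ℤ) - 1) * q ^ 3 + ((q:ℤ) - 1) * q ^ 2 - 2) * (q ^ 2 + q + 1) :=
    mul_le_mul_of_nonneg_right (by linarith) (by positivity)
  have hpoly : ((q:ℤ) ^ 3 + q ^ 2 + q + 1) * q ^ 3
      = 2 * ((q:ℤ) ^ 3 + q ^ 2 + q + 1)
        + (((q:ℤ) - 1) * q ^ 3 + ((q:ℤ) - 1) * q ^ 2 - 2) * (q ^ 2 + q + 1)
        + ((q:ℤ) ^ 4 + q ^ 2) := by ring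
  have hq4 : (0:ℤ) < (q:ℤ) ^ 4 + q ^ 2 := by positivity
  linarith [hb2, hb3, hpoly, hq4]

lemma square_split (n : ℕ) : (2 * n) * (2 * n) = 4 * (n * (n - 1)) + 4 * n := by
  rcases n with _ | m
  · rfl
  · have h : m + 1 - 1 = m := rfl
    rw [h]; ring

set_option maxHeartbeats 2000000 in
lemma c_value {q : ℕ} {H : Set (PGSolid F)} {R : PGPoint F}
    (hq2 : 2 ≤ q) (hcard : Fintype.card F = q) (hne : H.Nonempty) (hI : CondI q H)
    (hR : Red H R) : 2 * (Hf H).card = q ^ 4 + q ^ 2 := by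
  have huniq := red_unique hq2 hcard hne hI hR
  obtain ⟨S₀, hS₀H⟩ := hne
  have hS₀ : S₀ ∈ Hf H := mem_Hf.2 hS₀H
  obtain ⟨c', hc'⟩ : ∃ c', (Hf H).card = c' + 1 :=
    ⟨(Hf H).card - 1, by have := Finset.card_pos.2 ⟨S₀, hS₀⟩; omega⟩
  subst hcard
  have hRuniv : (Finset.univ : Finset (PGPoint F)).filter (fun P => Red H P) = {R} := by
    ext x
    simp only [Finset.mem_filter, Finset.mem_univ, true_and, Finset.mem_singleton]
    exact ⟨fun hx => huniq x hx, fun hx => hx ▸ hR⟩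
  -- the three global equations
  have e1 : Fintype.card F ^ 4 + Fintype.card F ^ 3 + Fintype.card F ^ 2 + Fintype.card F + 1
      = 1 + ((Finset.univ : Finset (PGPoint F)).filter
          (fun P => White (Fintype.card F) H P)).card
        + ((Finset.univ : Finset (PGPoint F)).filter
          (fun P => Black (Fintype.card F) H P)).card := by
    have h := tri hq2 hI (Finset.univ : Finset (PGPoint F)) (fun _ => 1)
    simp only [mul_one] at h
    rw [Finset.sum_const, smul_eq_mul, mul_one, card_pts_univ, hRuniv,
      Finset.card_singleton] at h
    exact h
  have e2 : ((Finset.univ : Finset (PGPoint F)).filter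
        (fun P => White (Fintype.card F) H P)).card * Fintype.card F ^ 3
      + ((Finset.univ : Finset (PGPoint F)).filter
        (fun P => Black (Fintype.card F) H P)).card
          * (Fintype.card F ^ 3 + Fintype.card F ^ 2)
      = 2 * ((c' + 1) * (Fintype.card F ^ 3 + Fintype.card F ^ 2 + Fintype.card F + 1)) := by
    have h := tri hq2 hI (Finset.univ : Finset (PGPoint F)) id
    simp only [id_eq, mul_zero, zero_add] at h
    rw [← Finset.mul_sum, sum_univ_nP, hc'] at h
    exact h.symm
  have e3 : ((Finset.univ : Finset (PGPoint F)).filter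
        (fun P => White (Fintype.card F) H P)).card
          * (Fintype.card F ^ 3 * Fintype.card F ^ 3)
      + ((Finset.univ : Finset (PGPoint F)).filter
        (fun P => Black (Fintype.card F) H P)).card
          * ((Fintype.card F ^ 3 + Fintype.card F ^ 2)
            * (Fintype.card F ^ 3 + Fintype.card F ^ 2))
      = 4 * ((c' + 1) * c' * (Fintype.card F ^ 2 + Fintype.card F + 1))
        + 4 * ((c' + 1)
          * (Fintype.card F ^ 3 + Fintype.card F ^ 2 + Fintype.card F + 1)) := by
    have h := tri hq2 hI (Finset.univ : Finset (PGPoint F)) (fun x => x * x)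
    simp only [mul_zero, zero_mul, zero_add] at h
    have hpt : ∀ P : PGPoint F, (2 * nP H P) * (2 * nP H P)
        = 4 * (nP H P * (nP H P - 1)) + 4 * nP H P := fun P => square_split _
    rw [Finset.sum_congr rfl (fun P _ => hpt P)] at h
    rw [Finset.sum_add_distrib, ← Finset.mul_sum, ← Finset.mul_sum,
      sum_pairs, sum_univ_nP, hc', Nat.add_sub_cancel] at h
    exact h.symm
  -- pass to ℤ and factor
  set A := ((Finset.univ : Finset (PGPoint F)).filter
      (fun P => White (Fintype.card F) H P)).card with hA
  set B := ((Finset.univ : Finset (PGPoint F)).filter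
      (fun P => Black (Fintype.card F) H P)).card with hB
  set q : ℕ := Fintype.card F with hq
  have e1z : ((q:ℤ) ^ 4 + q ^ 3 + q ^ 2 + q + 1) = 1 + (A:ℤ) + B := by exact_mod_cast e1
  have e2z : (A:ℤ) * q ^ 3 + (B:ℤ) * (q ^ 3 + q ^ 2)
      = 2 * (((c':ℤ) + 1) * (q ^ 3 + q ^ 2 + q + 1)) := by exact_mod_cast e2
  have e3z : (A:ℤ) * (q ^ 3 * q ^ 3) + (B:ℤ) * ((q ^ 3 + q ^ 2) * (q ^ 3 + q ^ 2))
      = 4 * (((c':ℤ) + 1) * c' * (q ^ 2 + q + 1))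
        + 4 * (((c':ℤ) + 1) * (q ^ 3 + q ^ 2 + q + 1)) := by exact_mod_cast e3
  have key : ((2 * ((c':ℤ) + 1) - q ^ 4 - q ^ 2)
      * (2 * (q ^ 2 + q + 1) * ((c':ℤ) + 1) - q ^ 4 * ((q:ℤ) + 1) ^ 2)) = 0 := by
    linear_combination (-(1:ℤ)) * e3z + (2 * (q:ℤ) ^ 3 + q ^ 2) * e2z
      + ((q:ℤ) ^ 6 + q ^ 5) * e1z
  rcases mul_eq_zero.1 key with hcase | hcase
  · have : (2 * ((c':ℤ) + 1)) = (q:ℤ) ^ 4 + q ^ 2 := by linarith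
    rw [hc']
    exact_mod_cast this
  · -- excluded case : use a line through R
    exfalso
    obtain ⟨P₀, hP₀⟩ : ∃ P₀, P₀ ∈ ptsIn S₀.1 := by
      have : 0 < (ptsIn S₀.1).card := by
        rw [card_ptsIn_4 S₀.2]; positivity
      exact Finset.card_pos.1 this
    have hP₀R : P₀ ≠ R := by
      intro h
      exact red_not_le hR S₀ hS₀ (h ▸ mem_ptsIn.1 hP₀)
    obtain ⟨r, w, k, f1, _, f3, f4⟩ := line_facts hq2 rfl hI hR hP₀R
    have hr1 : r = 1 := f3 huniq
    rw [hc'] at f4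
    -- 2(c'+1) = q^4 + k q^2  with w + k = q
    have hwk : w + k = q := by omega
    have hkq : k ≤ q := by omega
    have f4z : (w:ℤ) * q ^ 3 + k * (q ^ 3 + q ^ 2) = 2 * ((c':ℤ) + 1) := by exact_mod_cast f4
    have hwkz : (w:ℤ) + k = q := by exact_mod_cast hwk
    -- derive k (q²+q+1) = q³
    have hkey2 : (k:ℤ) * ((q:ℤ) ^ 2 + q + 1) * q ^ 2 = (q:ℤ) ^ 3 * q ^ 2 := by
      linear_combination ((q:ℤ) ^ 2 + q + 1) * f4z
        - ((q:ℤ) ^ 2 + q + 1) * (q:ℤ) ^ 3 * hwkz + hcase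
    have hq0 : ((q:ℤ) ^ 2 : ℤ) ≠ 0 := by
      have : (0:ℤ) < (q:ℤ) := by exact_mod_cast lt_of_lt_of_le (by norm_num) hq2
      positivity
    have hkey3 : (k:ℤ) * ((q:ℤ) ^ 2 + q + 1) = (q:ℤ) ^ 3 :=
      mul_right_cancel₀ hq0 hkey2
    have hkey4 : k * (q ^ 2 + q + 1) = q ^ 3 := by exact_mod_cast hkey3
    -- impossible
    by_cases hk : k ≤ q - 1
    · have h1 : k * (q ^ 2 + q + 1) ≤ (q - 1) * (q ^ 2 + q + 1) :=
        Nat.mul_le_mul_right _ hk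
      have h2 : (q - 1) * (q ^ 2 + q + 1) = q ^ 3 - 1 := by
        rw [mul_comm]; exact geom3 (by omega)
      have h3 : 1 ≤ q ^ 3 := Nat.one_le_pow _ _ (by omega)
      rw [hkey4, h2] at h1
      omega
    · have hkq' : k = q := by omega
      rw [hkq'] at hkey4
      have h1 : q * (q ^ 2 + q + 1) = q ^ 3 + q ^ 2 + q := by ring
      rw [h1] at hkey4
      have h2 : 0 < q ^ 2 := by positivity
      omega

theorem stmt6' (q : ℕ) (hq : ∃ n : ℕ, 0 < n ∧ q = 2 ^ n)
    (hcard : Fintype.card F = q)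
    (H : Set (PGSolid F)) (hne : H.Nonempty) (hI : CondI q H)
    (R : PGPoint F) (hR : Red H R) :
    ∀ π : {W : Submodule F (Fin 5 → F) // Module.finrank F W = 3}, R.1 ≤ π.1 →
      (blackIn q H π.1).ncard = q + 1 := by
  intro π hπ
  have hq2 : 2 ≤ q := by
    obtain ⟨n, hn, rfl⟩ := hq
    calc 2 = 2 ^ 1 := rfl
    _ ≤ 2 ^ n := Nat.pow_le_pow_right (by norm_num) hn
  have hc := c_value hq2 hcard hne hI hR
  have huniq := red_unique hq2 hcard hne hI hR
  have hbl : blackIn q H π.1 = ↑((ptsIn π.1).filter (fun P => Black q H P)) := by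
    ext P
    simp only [blackIn, Set.mem_setOf_eq, Finset.coe_filter, mem_ptsIn]
    tauto
  rw [hbl, Set.ncard_coe_finset]
  subst hcard
  have hRπ : (ptsIn π.1).filter (fun P => Red H P) = {R} := by
    ext x
    simp only [Finset.mem_filter, Finset.mem_singleton]
    constructor
    · rintro ⟨_, hx⟩; exact huniq x hx
    · rintro rfl; exact ⟨mem_ptsIn.2 hπ, hR⟩
  have e1 : Fintype.card F ^ 2 + Fintype.card F + 1
      = 1 + ((ptsIn π.1).filter (fun P => White (Fintype.card F) H P)).card
        + ((ptsIn π.1).filter (fun P => Black (Fintype.card F) H P)).card := by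
    have h := tri hq2 hI (ptsIn π.1) (fun _ => 1)
    simp only [mul_one] at h
    rw [Finset.sum_const, smul_eq_mul, mul_one, card_ptsIn_3 π.2, hRπ,
      Finset.card_singleton] at h
    exact h
  have e2 : ((ptsIn π.1).filter (fun P => White (Fintype.card F) H P)).card
        * Fintype.card F ^ 3
      + ((ptsIn π.1).filter (fun P => Black (Fintype.card F) H P)).card
        * (Fintype.card F ^ 3 + Fintype.card F ^ 2)
      = (Fintype.card F ^ 4 + Fintype.card F ^ 2) * (Fintype.card F + 1) := by
    have h := tri hq2 hI (ptsIn π.1) id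
    simp only [id_eq, mul_zero, zero_add] at h
    rw [← Finset.mul_sum, sum_plane hR π.2 hπ, ← mul_assoc, hc] at h
    exact h.symm
  -- solve for the number of black points
  set w := ((ptsIn π.1).filter (fun P => White (Fintype.card F) H P)).card with hw
  set k := ((ptsIn π.1).filter (fun P => Black (Fintype.card F) H P)).card with hk
  set q : ℕ := Fintype.card F with hqd
  have e1z : ((q:ℤ) ^ 2 + q + 1) = 1 + (w:ℤ) + k := by exact_mod_cast e1
  have e2z : (w:ℤ) * q ^ 3 + (k:ℤ) * (q ^ 3 + q ^ 2)
      = ((q:ℤ) ^ 4 + q ^ 2) * ((q:ℤ) + 1) := by exact_mod_cast e2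
  have hkey : (k:ℤ) * (q:ℤ) ^ 2 = ((q:ℤ) + 1) * (q:ℤ) ^ 2 := by
    linear_combination e2z + (q:ℤ) ^ 3 * e1z
  have hq0 : ((q:ℤ) ^ 2 : ℤ) ≠ 0 := by
    have : (0:ℤ) < (q:ℤ) := by exact_mod_cast lt_of_lt_of_le (by norm_num) hq2
    positivity
  have : (k:ℤ) = (q:ℤ) + 1 := mul_right_cancel₀ hq0 hkey
  exact_mod_cast this

end Aux

theorem stmt6 (q : ℕ) (hq : ∃ n : ℕ, 0 < n ∧ q = 2 ^ n)
    (F : Type*) [Field F] [Fintype F] (hcard : Fintype.card F = q)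
    (H : Set (PGSolid F)) (hne : H.Nonempty) (hI : CondI q H)
    (R : PGPoint F) (hR : Red H R) :
    ∀ π : PGPlane F, R.1 ≤ π.1 → (blackIn q H π.1).ncard = q + 1 := by
  intro π hπ
  exact stmt6' q hq hcard H hne hI R hR π hπ
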